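/- Let (Y_n)_{n≥1} be a nonnegative demisubmartingale with Y_k integrable for every k and the convention E[Y_0] = 0, let (c_k)_{1≤k≤n} be positive real numbers with c_1 ≤ c_2 ≤ … ≤ c_n, and let ε > 0. Then P( max_{1≤k≤n} Y_k/c_k ≥ ε ) ≤ ε^{−1} · Σ_{k=1}^n ( E[Y_k] − E[Y_{k−1}] ) / c_k. -/

import Mathlib

open MeasureTheory Filter

/-- A sequence `(T_n)_{n≥1}` of integrable real random variables is a *demimartingale*
if for every `j ≥ 1` and every componentwise nondecreasing `g : ℝ^j → ℝ` (i.e. monotone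
for the product order) such that `(T_{j+1} - T_j) · g(T_1, …, T_j)` is integrable, we have
`E[(T_{j+1} - T_j) g(T_1, …, T_j)] ≥ 0`. -/
def IsDemimartingale {Ω : Type*} [MeasurableSpace Ω] (μ : Measure Ω)
    (T : ℕ → Ω → ℝ) : Prop :=
  (∀ j, 1 ≤ j → Integrable (T j) μ) ∧
  ∀ j, 1 ≤ j → ∀ g : (Fin j → ℝ) → ℝ, Monotone g →
    Integrable (fun ω => (T (j + 1) ω - T j ω) * g (fun i => T (i.val + 1) ω)) μ →
    0 ≤ ∫ ω, (T (j + 1) ω - T j ω) * g (fun i => T (i.val + 1) ω) ∂μ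

/-- A sequence `(T_n)_{n≥1}` of integrable real random variables is a *demisubmartingale*
if the above holds for every such `g` that is in addition nonnegative. -/
def IsDemisubmartingale {Ω : Type*} [MeasurableSpace Ω] (μ : Measure Ω)
    (T : ℕ → Ω → ℝ) : Prop :=
  (∀ j, 1 ≤ j → Integrable (T j) μ) ∧
  ∀ j, 1 ≤ j → ∀ g : (Fin j → ℝ) → ℝ, Monotone g → (∀ x, 0 ≤ g x) →
    Integrable (fun ω => (T (j + 1) ω - T j ω) * g (fun i => T (i.val + 1) ω)) μ →
    0 ≤ ∫ ω, (T (j + 1) ω - T j ω) * g (fun i => T (i.val + 1) ω) ∂μ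


lemma tele_sum (D : ℕ → ℝ) : ∀ n, ∑ k ∈ Finset.Icc 1 n, (D k - D (k-1)) = D n - D 0
  | 0 => by simp
  | (n+1) => by
    rw [Finset.sum_Icc_succ_top (by omega), tele_sum D n]
    simp

lemma abel_aux (w d : ℕ → ℝ) : ∀ n, d 0 = 0 → (∀ k, 1 ≤ k → k ≤ n → 0 ≤ d k) →
    (∀ k, 1 ≤ k → k ≤ n → 0 ≤ w k) → (∀ k, 1 ≤ k → k < n → w (k+1) ≤ w k) →
    d n * w n ≤ ∑ k ∈ Finset.Icc 1 n, (d k - d (k-1)) * w k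
  | 0 => by intro h0 _ _ _; simp [h0]
  | (n+1) => by
    intro h0 hd hw hmono
    rw [Finset.sum_Icc_succ_top (by omega)]
    have ih := abel_aux w d n h0 (fun k h1 h2 => hd k h1 (by omega))
      (fun k h1 h2 => hw k h1 (by omega)) (fun k h1 h2 => hmono k h1 (by omega))
    have h1 : d n * w n - d n * w (n+1) ≥ 0 := by
      rcases Nat.eq_zero_or_pos n with h | h
      · simp [h, h0]
      · have := hmono n h (by omega)
        have := hd n h (by omega)
        nlinarith
    have : (n + 1 : ℕ) - 1 = n := by omega
    rw [this]
    nlinarith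


/-- **Maximal inequality for nonnegative demisubmartingales**: if `(Y_n)` is a
nonnegative demisubmartingale (with the convention `E[Y_0] = 0`), `0 < c_1 ≤ … ≤ c_n`
and `ε > 0`, then `P(max_{1≤k≤n} Y_k/c_k ≥ ε) ≤ ε⁻¹ Σ_{k=1}^n (E[Y_k] - E[Y_{k-1}])/c_k`.
The event `max_{1≤k≤n} Y_k/c_k ≥ ε` is expressed as the existence of some `1 ≤ k ≤ n`
with `Y_k/c_k ≥ ε`. -/
theorem maximal_inequality_nonneg_demisubmartingale
    {Ω : Type*} [MeasurableSpace Ω] (μ : Measure Ω) [IsProbabilityMeasure μ]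
    (Y : ℕ → Ω → ℝ)
    (hY : IsDemisubmartingale μ Y)
    (hY_nonneg : ∀ n ω, 0 ≤ Y n ω)
    (hY_int : ∀ k, 1 ≤ k → Integrable (Y k) μ)
    (hY0 : ∫ ω, Y 0 ω ∂μ = 0)
    (n : ℕ) (c : ℕ → ℝ)
    (hc_pos : ∀ k, 1 ≤ k → k ≤ n → 0 < c k)
    (hc_mono : ∀ k, 1 ≤ k → k < n → c k ≤ c (k + 1))
    (ε : ℝ) (hε : 0 < ε) :
    (μ {ω | ∃ k, 1 ≤ k ∧ k ≤ n ∧ ε ≤ Y k ω / c k}).toReal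
      ≤ ε⁻¹ * ∑ k ∈ Finset.Icc 1 n,
          ((∫ ω, Y k ω ∂μ) - (∫ ω, Y (k - 1) ω ∂μ)) / c k := by
  classical
  -- measurable, everywhere-nonnegative versions of Y k
  set f : ℕ → Ω → ℝ := fun k ω => if h : 1 ≤ k then
      max ((hY_int k h).aemeasurable.mk (Y k) ω) 0 else 0 with hf_def
  have hf_meas : ∀ k, Measurable (f k) := by
    intro k
    by_cases h : 1 ≤ k
    · simpa [hf_def, h] using ((hY_int k h).aemeasurable.measurable_mk.max measurable_const)
    · simpa [hf_def, h] using measurable_const (m := ‹MeasurableSpace Ω›) (a := (0:ℝ))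
  have hf_nonneg : ∀ k ω, 0 ≤ f k ω := by
    intro k ω; by_cases h : 1 ≤ k <;> simp [hf_def, h]
  have hf_eq : ∀ k, 1 ≤ k → f k =ᵐ[μ] Y k := by
    intro k h
    filter_upwards [(hY_int k h).aemeasurable.ae_eq_mk] with ω hω
    simp [hf_def, h, ← hω, max_eq_left (hY_nonneg k ω)]
  have hf_int : ∀ k, 1 ≤ k → Integrable (f k) μ :=
    fun k h => (hY_int k h).congr (hf_eq k h).symm
  have hf_integral : ∀ k, 1 ≤ k → ∫ ω, f k ω ∂μ = ∫ ω, Y k ω ∂μ :=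
    fun k h => integral_congr_ae (hf_eq k h)
  have hf0 : (f 0) = fun _ => (0:ℝ) := by
    funext ω; simp [hf_def]
  have hae : ∀ᵐ ω ∂μ, ∀ l, 1 ≤ l → f l ω = Y l ω := by
    rw [ae_all_iff]
    intro l
    by_cases h : 1 ≤ l
    · filter_upwards [hf_eq l h] with ω hω _
      exact hω
    · filter_upwards with ω hω
      omega
  -- the key sets
  set B : ℕ → Set Ω := fun k => {ω | ∃ j, 1 ≤ j ∧ j ≤ k ∧ ε * c j ≤ f j ω} with hB_def
  have hB_meas : ∀ k, MeasurableSet (B k) := by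
    intro k
    have : B k = ⋃ j ∈ Finset.Icc 1 k, {ω | ε * c j ≤ f j ω} := by
      ext ω
      simp only [hB_def, Set.mem_setOf_eq, Set.mem_iUnion, Finset.mem_Icc]
      tauto
    rw [this]
    exact Finset.measurableSet_biUnion _
      (fun j _ => measurableSet_le measurable_const (hf_meas j))
  have hB0 : B 0 = ∅ := by
    ext ω; simp only [hB_def, Set.mem_setOf_eq, Set.mem_empty_iff_false, iff_false]
    rintro ⟨j, h1, h2, _⟩; omega
  have hB_mono : ∀ k, B k ⊆ B (k+1) := by
    rintro k ω ⟨j, h1, h2, h3⟩; exact ⟨j, h1, by omega, h3⟩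
  set D : ℕ → ℝ := fun k => (μ (B k)).toReal with hD_def
  set m : ℕ → ℝ := fun k => ∫ ω, f k ω ∂μ with hm_def
  set φ : ℕ → ℝ := fun k => ∫ ω in B k, f k ω ∂μ with hφ_def
  have hD0 : D 0 = 0 := by simp [hD_def, hB0]
  have hm0 : m 0 = 0 := by simp [hm_def, hf0]
  have hφ0 : φ 0 = 0 := by simp [hφ_def, hB0]
  -- step 2: demisubmartingale step
  have step2 : ∀ j, 1 ≤ j → ∫ ω in B j, f j ω ∂μ ≤ ∫ ω in B j, f (j+1) ω ∂μ := by
    intro j hj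
    set g : (Fin j → ℝ) → ℝ := fun y => if ∃ i : Fin j, ε * c (i.val + 1) ≤ y i then 1 else 0
      with hg_def
    have hg_mono : Monotone g := by
      intro y z hyz
      simp only [hg_def]
      split_ifs with h1 h2
      · exact le_rfl
      · exact absurd (h1.elim fun i hi => ⟨i, hi.trans (hyz i)⟩) h2
      · norm_num
      · exact le_rfl
    have hg_nonneg : ∀ x, 0 ≤ g x := by
      intro x; simp only [hg_def]; split_ifs <;> norm_num
    have key_eq : (fun ω => (Y (j+1) ω - Y j ω) * g (fun i => Y (i.val+1) ω))
        =ᵐ[μ] fun ω => (B j).indicator (fun ω => f (j+1) ω - f j ω) ω := by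
      filter_upwards [hae] with ω hω
      have hcond : (∃ i : Fin j, ε * c (i.val + 1) ≤ Y (i.val+1) ω) ↔ ω ∈ B j := by
        constructor
        · rintro ⟨i, hi⟩
          refine ⟨i.val+1, by omega, by omega, ?_⟩
          rw [hω (i.val+1) (by omega)]
          exact hi
        · rintro ⟨l, hl1, hl2, hl3⟩
          refine ⟨⟨l-1, by omega⟩, ?_⟩
          have h' : l - 1 + 1 = l := by omega
          simp only [h']
          rw [← hω l hl1]
          exact hl3
      by_cases hmem : ω ∈ B j
      · rw [Set.indicator_of_mem hmem]
        have : g (fun i => Y (i.val+1) ω) = 1 := by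
          simp only [hg_def, if_pos (hcond.2 hmem)]
        rw [this, mul_one, hω (j+1) (by omega), hω j hj]
      · rw [Set.indicator_of_notMem hmem]
        have : g (fun i => Y (i.val+1) ω) = 0 := by
          simp only [hg_def, if_neg (fun h => hmem (hcond.1 h))]
        rw [this, mul_zero]
    have hint_ind : Integrable (fun ω => (B j).indicator (fun ω => f (j+1) ω - f j ω) ω) μ := by
      exact ((hf_int (j+1) (by omega)).sub (hf_int j hj)).indicator (hB_meas j)
    have hint : Integrable (fun ω => (Y (j+1) ω - Y j ω) * g (fun i => Y (i.val+1) ω)) μ :=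
      hint_ind.congr key_eq.symm
    have hpos := hY.2 j hj g hg_mono hg_nonneg hint
    rw [integral_congr_ae key_eq, integral_indicator (hB_meas j),
      integral_sub ((hf_int (j+1) (by omega)).integrableOn) ((hf_int j hj).integrableOn)]
      at hpos
    linarith
  -- step 1: Markov-type step
  have step1 : ∀ k, 1 ≤ k → k ≤ n → ε * (D k - D (k-1)) ≤ (φ k - φ (k-1)) / c k := by
    intro k hk hkn
    have hkk : k - 1 + 1 = k := by omega
    have hsub : B (k-1) ⊆ B k := by
      rw [← hkk]; exact hB_mono (k-1)
    have hdiff_prop : ∀ ω ∈ B k \ B (k-1), ε * c k ≤ f k ω := by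
      rintro ω ⟨⟨j, h1, h2, h3⟩, hnot⟩
      rcases Nat.lt_or_ge j k with h | h
      · exact absurd ⟨j, h1, by omega, h3⟩ hnot
      · have : j = k := by omega
        rwa [this] at h3
    have hmeas_diff : MeasurableSet (B k \ B (k-1)) := (hB_meas k).diff (hB_meas (k-1))
    have hμd : (μ (B k \ B (k-1))).toReal = D k - D (k-1) := by
      rw [measure_diff hsub (hB_meas (k-1)).nullMeasurableSet (measure_ne_top μ _),
        ENNReal.toReal_sub_of_le (measure_mono hsub) (measure_ne_top μ _)]
    have h1 : ε * c k * (μ (B k \ B (k-1))).toReal ≤ ∫ ω in B k \ B (k-1), f k ω ∂μ :=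
      setIntegral_ge_of_const_le_real hmeas_diff (measure_ne_top μ _) hdiff_prop
        (hf_int k hk).integrableOn
    have h2 : φ k = (∫ ω in B (k-1), f k ω ∂μ) + ∫ ω in B k \ B (k-1), f k ω ∂μ := by
      rw [hφ_def]
      simp only
      rw [← setIntegral_union (Set.disjoint_sdiff_right) hmeas_diff
        (hf_int k hk).integrableOn (hf_int k hk).integrableOn,
        Set.union_diff_cancel hsub]
    have h3 : φ (k-1) ≤ ∫ ω in B (k-1), f k ω ∂μ := by
      rcases Nat.eq_or_lt_of_le hk with h | h
      · have hk1 : k - 1 = 0 := by omega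
        rw [hk1, hφ0, hB0]
        simp
      · have hk1 : 1 ≤ k - 1 := by omega
        have := step2 (k-1) hk1
        rw [hkk] at this
        exact this
    have hck := hc_pos k hk hkn
    rw [hμd] at h1
    rw [le_div_iff₀ hck]
    nlinarith
  -- measure of the original event
  have hA_sub : μ {ω | ∃ k, 1 ≤ k ∧ k ≤ n ∧ ε ≤ Y k ω / c k} ≤ μ (B n) := by
    apply measure_mono_ae
    filter_upwards [hae] with ω hω
    rintro ⟨k, h1, h2, h3⟩
    refine ⟨k, h1, h2, ?_⟩
    rw [hω k h1]
    exact (le_div_iff₀ (hc_pos k h1 h2)).1 h3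
  -- core inequality
  have core : ε * D n ≤ ∑ k ∈ Finset.Icc 1 n, (φ k - φ (k-1)) / c k := by
    have : ε * D n = ∑ k ∈ Finset.Icc 1 n, ε * (D k - D (k-1)) := by
      rw [← Finset.mul_sum, tele_sum D n, hD0, sub_zero]
    rw [this]
    apply Finset.sum_le_sum
    intro k hk
    rw [Finset.mem_Icc] at hk
    exact step1 k hk.1 hk.2
  -- Abel comparison
  have abel : ∑ k ∈ Finset.Icc 1 n, (φ k - φ (k-1)) / c k
      ≤ ∑ k ∈ Finset.Icc 1 n, (m k - m (k-1)) / c k := by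
    set d : ℕ → ℝ := fun k => m k - φ k with hd_def
    have hd0 : d 0 = 0 := by simp [hd_def, hm0, hφ0]
    have hd_nonneg : ∀ k, 1 ≤ k → k ≤ n → 0 ≤ d k := by
      intro k h1 h2
      have hsplit := integral_add_compl (hB_meas k) (hf_int k h1)
      have hcompl : 0 ≤ ∫ ω in (B k)ᶜ, f k ω ∂μ :=
        setIntegral_nonneg (hB_meas k).compl (fun ω _ => hf_nonneg k ω)
      simp only [hd_def, hm_def, hφ_def]
      linarith
    have key := abel_aux (fun k => (c k)⁻¹) d n hd0 hd_nonneg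
      (fun k h1 h2 => inv_nonneg.2 (hc_pos k h1 h2).le)
      (fun k h1 h2 => by
        have ha := hc_pos k h1 (by omega)
        have hb := hc_pos (k+1) (by omega) (by omega)
        exact inv_anti₀ ha (hc_mono k h1 h2))
    have hdn : 0 ≤ d n * (c n)⁻¹ := by
      rcases Nat.eq_zero_or_pos n with h | h
      · simp [h, hd0]
      · exact mul_nonneg (hd_nonneg n h le_rfl) (inv_nonneg.2 (hc_pos n h le_rfl).le)
    have hsum : 0 ≤ ∑ k ∈ Finset.Icc 1 n, (d k - d (k-1)) * (c k)⁻¹ := le_trans hdn key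
    have hexp : ∑ k ∈ Finset.Icc 1 n, (d k - d (k-1)) * (c k)⁻¹
        = ∑ k ∈ Finset.Icc 1 n, (m k - m (k-1)) / c k
          - ∑ k ∈ Finset.Icc 1 n, (φ k - φ (k-1)) / c k := by
      rw [← Finset.sum_sub_distrib]
      apply Finset.sum_congr rfl
      intro k _
      simp only [hd_def]
      field_simp
      ring
    linarith [hexp ▸ hsum]
  -- put it together
  have hrhs : ∑ k ∈ Finset.Icc 1 n, ((∫ ω, Y k ω ∂μ) - (∫ ω, Y (k - 1) ω ∂μ)) / c k
      = ∑ k ∈ Finset.Icc 1 n, (m k - m (k-1)) / c k := by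
    apply Finset.sum_congr rfl
    intro k hk
    rw [Finset.mem_Icc] at hk
    have h1 : ∫ ω, Y k ω ∂μ = m k := (hf_integral k hk.1).symm
    have h2 : ∫ ω, Y (k-1) ω ∂μ = m (k-1) := by
      rcases Nat.eq_or_lt_of_le hk.1 with h | h
      · have : k - 1 = 0 := by omega
        rw [this, hY0, hm0]
      · exact (hf_integral (k-1) (by omega)).symm
    rw [h1, h2]
  rw [hrhs]
  have hDn : (μ {ω | ∃ k, 1 ≤ k ∧ k ≤ n ∧ ε ≤ Y k ω / c k}).toReal ≤ D n :=
    ENNReal.toReal_mono (measure_ne_top μ _) hA_sub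
  calc (μ {ω | ∃ k, 1 ≤ k ∧ k ≤ n ∧ ε ≤ Y k ω / c k}).toReal ≤ D n := hDn
    _ = ε⁻¹ * (ε * D n) := by field_simp
    _ ≤ ε⁻¹ * ∑ k ∈ Finset.Icc 1 n, (m k - m (k-1)) / c k := by
        apply mul_le_mul_of_nonneg_left _ (inv_nonneg.2 hε.le)
        exact le_trans core (le_of_eq rfl) |>.trans abel
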